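/- arXiv:2009.08222 — 2 statements merged into one kernel-verified Lean document; each statement's English description precedes it below -/
import Mathlib

section
/- For every integer m ≥ 2, A(F_m) = ⌊2^m/6 + (m+1)/2⌋. -/
open scoped BigOperators
open Filter Topology

attribute [local instance 10] Classical.propDecidable

/-- A natural number is a Fibonacci number, i.e. equals `F m` for some `m ≥ 1`
(with `F 1 = F 2 = 1`). -/
def IsFibNum (x : ℕ) : Prop := ∃ m : ℕ, 0 < m ∧ Nat.fib m = x

/-- `R n` counts the partitions of `n` into distinct Fibonacci numbers:
the number of finite sets of Fibonacci numbers with sum `n` (so `R 0 = 1`). -/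
noncomputable def R (n : ℕ) : ℕ :=
  Nat.card {S : Finset ℕ // (∀ x ∈ S, IsFibNum x) ∧ (∑ x ∈ S, x) = n}

/-- The summatory function `A H = ∑_{n=0}^{H} R n`. -/
noncomputable def A (H : ℕ) : ℕ := ∑ n ∈ Finset.range (H + 1), R n

/-- Index-set counting function: subsets of `[2, m]` whose fib-sum is at most `fib m`. -/
def M (m : ℕ) : ℕ :=
  (((Finset.Icc 2 m).powerset).filter (fun T => ∑ i ∈ T, Nat.fib i ≤ Nat.fib m)).card

lemma fib_injOn (m : ℕ) : Set.InjOn Nat.fib ↑(Finset.Icc 2 m) := by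
  intro a ha b hb hab
  simp only [Finset.coe_Icc, Set.mem_Icc] at ha hb
  exact Nat.fib_strictMonoOn.injOn (by exact ha.1) (by exact hb.1) hab

lemma sum_fib_Icc (k : ℕ) (hk : 2 ≤ k) :
    (∑ i ∈ Finset.Icc 2 k, Nat.fib i) + 2 = Nat.fib (k + 2) := by
  induction k, hk using Nat.le_induction with
  | base => decide
  | succ k hk ih =>
    rw [Finset.sum_Icc_succ_top (by omega)]
    have h2 : Nat.fib (k + 1 + 2) = Nat.fib (k + 1) + Nat.fib (k + 2) := Nat.fib_add_two
    omega

lemma R_eq (n : ℕ) :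
    R n = (((Finset.range (n + 1)).powerset).filter
      (fun S => (∀ x ∈ S, IsFibNum x) ∧ ∑ x ∈ S, x = n)).card := by
  have h : {S : Finset ℕ | (∀ x ∈ S, IsFibNum x) ∧ ∑ x ∈ S, x = n} =
      ↑(((Finset.range (n + 1)).powerset).filter
      (fun S => (∀ x ∈ S, IsFibNum x) ∧ ∑ x ∈ S, x = n)) := by
    ext S
    simp only [Set.mem_setOf_eq, Finset.coe_filter, Finset.mem_powerset]
    constructor
    · rintro ⟨h1, h2⟩
      refine ⟨?_, h1, h2⟩
      intro x hx
      have hle : x ≤ ∑ y ∈ S, y := Finset.single_le_sum (fun y _ => Nat.zero_le y) hx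
      simp only [Finset.mem_range]; omega
    · rintro ⟨_, h1, h2⟩; exact ⟨h1, h2⟩
  calc R n = Nat.card {S : Finset ℕ | (∀ x ∈ S, IsFibNum x) ∧ ∑ x ∈ S, x = n} := rfl
    _ = ({S : Finset ℕ | (∀ x ∈ S, IsFibNum x) ∧ ∑ x ∈ S, x = n} : Set (Finset ℕ)).ncard :=
        Nat.card_coe_set_eq _
    _ = _ := by rw [h, Set.ncard_coe_finset]

lemma A_eq (H : ℕ) :
    A H = (((Finset.range (H + 1)).powerset).filter
      (fun S => (∀ x ∈ S, IsFibNum x) ∧ ∑ x ∈ S, x ≤ H)).card := by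
  rw [A]
  rw [Finset.card_eq_sum_card_fiberwise (f := fun S : Finset ℕ => ∑ x ∈ S, x)
    (t := Finset.range (H + 1)) (fun S hS => by
      simp only [Finset.mem_coe, Finset.mem_filter] at hS
      simp only [Finset.mem_coe, Finset.mem_range]; omega)]
  refine Finset.sum_congr rfl (fun n hn => ?_)
  simp only [Finset.mem_range] at hn
  rw [R_eq n]
  congr 1
  ext S
  simp only [Finset.mem_filter, Finset.mem_powerset]
  constructor
  · rintro ⟨hsub, h1, h2⟩
    refine ⟨⟨?_, h1, by omega⟩, h2⟩
    exact hsub.trans (by intro x hx; simp only [Finset.mem_range] at hx ⊢; omega)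
  · rintro ⟨⟨hsub, h1, _⟩, h2⟩
    refine ⟨?_, h1, h2⟩
    intro x hx
    have hle : x ≤ ∑ y ∈ S, y := Finset.single_le_sum (fun y _ => Nat.zero_le y) hx
    simp only [Finset.mem_range]; omega

lemma A_fib_eq_M (m : ℕ) (hm : 2 ≤ m) : A (Nat.fib m) = M m := by
  rw [A_eq, M]
  apply Finset.card_bij' (fun S _ => (Finset.Icc 2 m).filter (fun i => Nat.fib i ∈ S))
    (fun T _ => T.image Nat.fib)
  · -- maps into
    intro S hS
    simp only [Finset.mem_filter, Finset.mem_powerset] at hS ⊢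
    obtain ⟨hsub, hfib, hsum⟩ := hS
    refine ⟨Finset.filter_subset _ _, ?_⟩
    have hinj : Set.InjOn Nat.fib ↑((Finset.Icc 2 m).filter (fun i => Nat.fib i ∈ S)) := by
      apply (fib_injOn m).mono
      intro x hx
      simp only [Finset.coe_filter, Set.mem_setOf_eq] at hx
      simpa [Finset.coe_Icc, Set.mem_Icc] using hx.1
    calc ∑ i ∈ (Finset.Icc 2 m).filter (fun i => Nat.fib i ∈ S), Nat.fib i
        = ∑ x ∈ ((Finset.Icc 2 m).filter (fun i => Nat.fib i ∈ S)).image Nat.fib, x := by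
          rw [Finset.sum_image (fun a ha b hb => hinj ha hb)]
      _ ≤ ∑ x ∈ S, x := by
          apply Finset.sum_le_sum_of_subset
          intro x hx
          simp only [Finset.mem_image, Finset.mem_filter] at hx
          obtain ⟨i, ⟨_, hi⟩, rfl⟩ := hx
          exact hi
      _ ≤ Nat.fib m := hsum
  · -- maps into
    intro T hT
    simp only [Finset.mem_filter, Finset.mem_powerset] at hT ⊢
    obtain ⟨hsub, hsum⟩ := hT
    have hinj : Set.InjOn Nat.fib ↑T := (fib_injOn m).mono (by exact_mod_cast hsub)
    have hsum' : ∑ x ∈ T.image Nat.fib, x = ∑ i ∈ T, Nat.fib i :=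
      Finset.sum_image (fun a ha b hb => hinj ha hb)
    refine ⟨?_, ?_, by omega⟩
    · intro x hx
      simp only [Finset.mem_image] at hx
      obtain ⟨i, hi, rfl⟩ := hx
      have h1 : Nat.fib i ≤ ∑ j ∈ T, Nat.fib j :=
        Finset.single_le_sum (fun j _ => Nat.zero_le _) hi
      simp only [Finset.mem_range]; omega
    · intro x hx
      simp only [Finset.mem_image] at hx
      obtain ⟨i, hi, rfl⟩ := hx
      have := hsub hi
      simp only [Finset.mem_Icc] at this
      exact ⟨i, by omega, rfl⟩
  · -- left inverse
    intro S hS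
    simp only [Finset.mem_filter, Finset.mem_powerset] at hS
    obtain ⟨hsub, hfib, hsum⟩ := hS
    ext x
    simp only [Finset.mem_image, Finset.mem_filter]
    constructor
    · rintro ⟨i, ⟨_, hi⟩, rfl⟩; exact hi
    · intro hx
      obtain ⟨k, hk, rfl⟩ := hfib x hx
      have hk2 : Nat.fib (max k 2) = Nat.fib k := by
        rcases Nat.lt_or_ge k 2 with h | h
        · interval_cases k <;> simp
        · rw [max_eq_left h]
      have hxle : Nat.fib k ≤ Nat.fib m := by
        have h1 : Nat.fib k ≤ ∑ y ∈ S, y :=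
          Finset.single_le_sum (fun y _ => Nat.zero_le y) hx
        omega
      have hkm : max k 2 ≤ m := by
        by_contra hcon
        push_neg at hcon
        have : Nat.fib m < Nat.fib (max k 2) := (Nat.fib_lt_fib hm).2 hcon
        omega
      exact ⟨max k 2, ⟨by simp [Finset.mem_Icc, hkm], by rw [hk2]; exact hx⟩, hk2⟩
  · -- right inverse
    intro T hT
    simp only [Finset.mem_filter, Finset.mem_powerset] at hT
    obtain ⟨hsub, _⟩ := hT
    ext i
    simp only [Finset.mem_filter, Finset.mem_image]
    constructor
    · rintro ⟨hi, j, hj, hji⟩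
      have := (fib_injOn m) (by exact_mod_cast hsub hj) (by exact_mod_cast hi) hji
      rwa [← this]
    · intro hi
      exact ⟨hsub hi, i, hi, rfl⟩

lemma M_rec (k : ℕ) : M (k + 4) = 2 ^ (k + 1) + M (k + 2) + 1 := by
  classical
  have hfib4 : Nat.fib (k + 4) = Nat.fib (k + 2) + Nat.fib (k + 3) :=
    Nat.fib_add_two (n := k + 2)
  set U := ((Finset.Icc 2 (k + 4)).powerset).filter
      (fun T => ∑ i ∈ T, Nat.fib i ≤ Nat.fib (k + 4)) with hU
  have hsplit1 : (U.filter (fun T => k + 4 ∈ T)).card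
      + (U.filter (fun T => k + 4 ∉ T)).card = U.card :=
    Finset.card_filter_add_card_filter_not _
  set U' := U.filter (fun T => k + 4 ∉ T) with hU'
  have hsplit2 : (U'.filter (fun T => k + 3 ∈ T)).card
      + (U'.filter (fun T => k + 3 ∉ T)).card = U'.card :=
    Finset.card_filter_add_card_filter_not _
  -- Piece 1 : T containing k+4 must be {k+4}
  have hp1 : U.filter (fun T => k + 4 ∈ T) = {({k + 4} : Finset ℕ)} := by
    ext T
    simp only [hU, Finset.mem_filter, Finset.mem_powerset, Finset.mem_singleton]
    constructor
    · rintro ⟨⟨hsub, hsum⟩, hmem⟩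
      have hins : T = insert (k + 4) (T.erase (k + 4)) := (Finset.insert_erase hmem).symm
      have hsum2 : ∑ i ∈ T, Nat.fib i
          = Nat.fib (k + 4) + ∑ i ∈ T.erase (k + 4), Nat.fib i := by
        conv_lhs => rw [hins]
        rw [Finset.sum_insert (Finset.notMem_erase _ _)]
      have hzero : ∑ i ∈ T.erase (k + 4), Nat.fib i = 0 := by omega
      have hemp : T.erase (k + 4) = ∅ := by
        rw [Finset.eq_empty_iff_forall_notMem]
        intro i hi
        have h1 : Nat.fib i = 0 := by
          have := Finset.sum_eq_zero_iff.1 hzero i hi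
          exact this
        have h2 : i ∈ T := Finset.mem_of_mem_erase hi
        have h3 := hsub h2
        simp only [Finset.mem_Icc] at h3
        rw [Nat.fib_eq_zero] at h1
        omega
      rw [hins, hemp]
      simp
    · rintro rfl
      refine ⟨⟨?_, by simp⟩, by simp⟩
      simp [Finset.singleton_subset_iff, Finset.mem_Icc]
  -- Piece 3 : T avoiding both k+3 and k+4
  have hp3 : U'.filter (fun T => k + 3 ∉ T) = (Finset.Icc 2 (k + 2)).powerset := by
    ext T
    simp only [hU', hU, Finset.mem_filter, Finset.mem_powerset]
    constructor
    · rintro ⟨⟨⟨hsub, _⟩, h4⟩, h3⟩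
      intro x hx
      have := hsub hx
      simp only [Finset.mem_Icc] at this ⊢
      have hx3 : x ≠ k + 3 := fun h => h3 (h ▸ hx)
      have hx4 : x ≠ k + 4 := fun h => h4 (h ▸ hx)
      omega
    · intro hsub
      have h3 : k + 3 ∉ T := fun h => by
        have := hsub h; simp only [Finset.mem_Icc] at this; omega
      have h4 : k + 4 ∉ T := fun h => by
        have := hsub h; simp only [Finset.mem_Icc] at this; omega
      refine ⟨⟨⟨hsub.trans ?_, ?_⟩, h4⟩, h3⟩
      · apply Finset.Icc_subset_Icc_right; omega
      · have hb : ∑ i ∈ T, Nat.fib i ≤ ∑ i ∈ Finset.Icc 2 (k + 2), Nat.fib i :=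
          Finset.sum_le_sum_of_subset hsub
        have hs := sum_fib_Icc (k + 2) (by omega)
        rw [show k + 2 + 2 = k + 4 from rfl] at hs
        omega
  -- Piece 2 : T avoiding k+4 but containing k+3
  have hp2 : (U'.filter (fun T => k + 3 ∈ T)).card = M (k + 2) := by
    rw [M]
    refine Finset.card_bij' (fun T _ => T.erase (k + 3)) (fun T _ => insert (k + 3) T)
      ?_ ?_ ?_ ?_
    · intro T hT
      simp only [hU', hU, Finset.mem_filter, Finset.mem_powerset] at hT ⊢
      obtain ⟨⟨⟨hsub, hsum⟩, h4⟩, h3⟩ := hT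
      have hsum2 : ∑ i ∈ T, Nat.fib i
          = Nat.fib (k + 3) + ∑ i ∈ T.erase (k + 3), Nat.fib i := by
        conv_lhs => rw [(Finset.insert_erase h3).symm]
        rw [Finset.sum_insert (Finset.notMem_erase _ _)]
      constructor
      · intro x hx
        have hxT : x ∈ T := Finset.mem_of_mem_erase hx
        have hx3 : x ≠ k + 3 := Finset.ne_of_mem_erase hx
        have hx4 : x ≠ k + 4 := fun h => h4 (h ▸ hxT)
        have := hsub hxT
        simp only [Finset.mem_Icc] at this ⊢
        omega
      · omega
    · intro T hT
      simp only [hU', hU, Finset.mem_filter, Finset.mem_powerset] at hT ⊢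
      obtain ⟨hsub, hsum⟩ := hT
      have h3 : k + 3 ∉ T := fun h => by
        have := hsub h; simp only [Finset.mem_Icc] at this; omega
      have hsum2 : ∑ i ∈ insert (k + 3) T, Nat.fib i
          = Nat.fib (k + 3) + ∑ i ∈ T, Nat.fib i := Finset.sum_insert h3
      refine ⟨⟨⟨?_, by omega⟩, ?_⟩, Finset.mem_insert_self _ _⟩
      · intro x hx
        rcases Finset.mem_insert.1 hx with rfl | hx
        · simp only [Finset.mem_Icc]; omega
        · have := hsub hx; simp only [Finset.mem_Icc] at this ⊢; omega
      · intro h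
        rcases Finset.mem_insert.1 h with h' | h'
        · omega
        · have := hsub h'; simp only [Finset.mem_Icc] at this; omega
    · intro T hT
      simp only [hU', hU, Finset.mem_filter, Finset.mem_powerset] at hT
      exact Finset.insert_erase hT.2
    · intro T hT
      simp only [Finset.mem_filter, Finset.mem_powerset] at hT
      apply Finset.erase_insert
      intro h
      have := hT.1 h; simp only [Finset.mem_Icc] at this; omega
  have hcard3 : (U'.filter (fun T => k + 3 ∉ T)).card = 2 ^ (k + 1) := by
    rw [hp3, Finset.card_powerset, Nat.card_Icc]
    congr 1
  have hcard1 : (U.filter (fun T => k + 4 ∈ T)).card = 1 := by rw [hp1]; rfl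
  have : M (k + 4) = U.card := rfl
  omega

lemma M_lin (m : ℕ) (hm : 2 ≤ m) :
    6 * M m + (if Even m then 1 else 2) = 2 ^ m + 3 * m + 3 := by
  induction m using Nat.strong_induction_on with
  | _ m ih =>
    rcases Nat.lt_or_ge m 4 with h4 | h4
    · interval_cases m
      · decide
      · decide
    · obtain ⟨k, rfl⟩ : ∃ k, m = k + 4 := ⟨m - 4, by omega⟩
      have h2 := ih (k + 2) (by omega) (by omega)
      have i1 : Even (k + 4) ↔ Even k := by
        simp [Nat.even_add, show Even 4 by decide]
      have i2 : Even (k + 2) ↔ Even k := by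
        simp [Nat.even_add, show Even 2 by decide]
      rw [M_rec]
      have e1 : (2 : ℕ) ^ (k + 4) = 8 * 2 ^ (k + 1) := by ring
      have e2 : (2 : ℕ) ^ (k + 2) = 2 * 2 ^ (k + 1) := by ring
      by_cases h : Even k
      · rw [if_pos (i1.2 h)]
        rw [if_pos (i2.2 h)] at h2
        omega
      · rw [if_neg (fun hc => h (i1.1 hc))]
        rw [if_neg (fun hc => h (i2.1 hc))] at h2
        omega

/-- `A(F_m) = ⌊2^m/6 + (m+1)/2⌋` for `m ≥ 2`. -/
theorem summatory_at_fib (m : ℕ) (hm : 2 ≤ m) :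
    (A (Nat.fib m) : ℤ) = ⌊(2 ^ m : ℚ) / 6 + ((m : ℚ) + 1) / 2⌋ := by
  rw [A_fib_eq_M m hm]
  symm
  rw [Int.floor_eq_iff]
  have key := M_lin m hm
  have h1 : 6 * M m + 1 ≤ 2 ^ m + 3 * m + 3 := by rw [← key]; split_ifs <;> omega
  have h2 : 2 ^ m + 3 * m + 3 ≤ 6 * M m + 2 := by rw [← key]; split_ifs <;> omega
  have q1 : 6 * (M m : ℚ) + 1 ≤ 2 ^ m + 3 * m + 3 := by exact_mod_cast h1
  have q2 : (2 : ℚ) ^ m + 3 * m + 3 ≤ 6 * (M m : ℚ) + 2 := by exact_mod_cast h2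
  constructor
  · push_cast
    linarith
  · push_cast
    linarith
end

section
/- With c = (√5)^λ/6, one has c/2 ≤ liminf_{H→∞} A(H)/H^λ ≤ limsup_{H→∞} A(H)/H^λ ≤ 2c; in particular A(H) ≍ H^λ. -/
open scoped BigOperators
open Filter Topology

/-! ### Auxiliary combinatorics -/

open Classical in
/-- The finite set of fib-subsets with sum `< B`. -/
noncomputable def W (B : ℕ) : Finset (Finset ℕ) :=
  (Finset.range B).powerset.filter (fun S => (∀ x ∈ S, IsFibNum x) ∧ (∑ x ∈ S, x) < B)

lemma IsFibNum.one_le {x : ℕ} (h : IsFibNum x) : 1 ≤ x := by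
  obtain ⟨m, hm, rfl⟩ := h
  exact Nat.fib_pos.2 hm

lemma le_sum_of_mem {S : Finset ℕ} {x : ℕ} (hx : x ∈ S) : x ≤ ∑ y ∈ S, y :=
  Finset.single_le_sum (f := fun y => y) (fun _ _ => Nat.zero_le _) hx

lemma mem_W {B : ℕ} {S : Finset ℕ} :
    S ∈ W B ↔ (∀ x ∈ S, IsFibNum x) ∧ (∑ x ∈ S, x) < B := by
  classical
  constructor
  · intro h
    simp only [W, Finset.mem_filter] at h
    exact ⟨fun x hx => (h.2.1 x hx), h.2.2⟩
  · intro h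
    simp only [W, Finset.mem_filter, Finset.mem_powerset]
    refine ⟨fun x hx => Finset.mem_range.2 ?_, h.1, h.2⟩
    exact lt_of_le_of_lt (le_sum_of_mem hx) h.2

lemma W_mono {B B' : ℕ} (h : B ≤ B') : W B ⊆ W B' := by
  intro S hS
  rw [mem_W] at hS ⊢
  exact ⟨hS.1, lt_of_lt_of_le hS.2 h⟩

lemma R_eq_card {n B : ℕ} (hn : n < B) :
    R n = ((W B).filter (fun S => (∑ x ∈ S, x) = n)).card := by
  classical
  have hset : {S : Finset ℕ | (∀ x ∈ S, IsFibNum x) ∧ (∑ x ∈ S, x) = n}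
      = ((W B).filter (fun S => (∑ x ∈ S, x) = n) : Finset (Finset ℕ)) := by
    ext S
    simp only [Set.mem_setOf_eq, Finset.coe_filter, mem_W]
    constructor
    · rintro ⟨h1, h2⟩
      exact ⟨⟨h1, h2 ▸ hn⟩, h2⟩
    · rintro ⟨⟨h1, _⟩, h2⟩
      exact ⟨h1, h2⟩
  rw [R]
  have : {S : Finset ℕ // (∀ x ∈ S, IsFibNum x) ∧ (∑ x ∈ S, x) = n}
      = {S : Finset ℕ // S ∈ {S : Finset ℕ | (∀ x ∈ S, IsFibNum x) ∧ (∑ x ∈ S, x) = n}} := rfl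
  rw [this]
  rw [show Nat.card {S : Finset ℕ // S ∈ {S : Finset ℕ | (∀ x ∈ S, IsFibNum x) ∧ (∑ x ∈ S, x) = n}}
      = Set.ncard {S : Finset ℕ | (∀ x ∈ S, IsFibNum x) ∧ (∑ x ∈ S, x) = n} from
      (Nat.card_coe_set_eq _)]
  rw [hset, Set.ncard_coe_finset]

lemma A_eq_card (H : ℕ) : A H = (W (H + 1)).card := by
  classical
  rw [Finset.card_eq_sum_card_fiberwise
    (f := fun S => ∑ x ∈ S, x) (t := Finset.range (H + 1))
    (fun S hS => Finset.mem_range.2 (mem_W.1 hS).2)]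
  rw [A]
  refine Finset.sum_congr rfl (fun n hn => ?_)
  exact R_eq_card (Finset.mem_range.1 hn)

lemma A_mono : Monotone A := by
  intro a b hab
  rw [A_eq_card, A_eq_card]
  exact Finset.card_le_card (W_mono (by omega))

lemma sum_Icc_fib (k : ℕ) : (∑ j ∈ Finset.Icc 2 (k+2), Nat.fib j) + 2 = Nat.fib (k+4) := by
  induction k with
  | zero => decide
  | succ k ih =>
    rw [show k+1+2 = (k+2)+1 from rfl, Finset.sum_Icc_succ_top (by omega)]
    have e1 : Nat.fib (k+2+1) = Nat.fib (k+3) := rfl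
    have e2 : Nat.fib (k+1+4) = Nat.fib (k+3) + Nat.fib (k+4) := Nat.fib_add_two
    omega

/-- the set of fib values `F 2, ..., F (k+2)`. -/
noncomputable def D (k : ℕ) : Finset ℕ := (Finset.Icc 2 (k+2)).image Nat.fib

lemma fib_injOn_s8 (k : ℕ) : ∀ x ∈ Finset.Icc 2 (k+2), ∀ y ∈ Finset.Icc 2 (k+2),
    Nat.fib x = Nat.fib y → x = y := by
  intro x hx y hy h
  simp only [Finset.mem_Icc] at hx hy
  exact Nat.fib_strictMonoOn.injOn (Set.mem_setOf.2 hx.1) (Set.mem_setOf.2 hy.1) h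

lemma card_D (k : ℕ) : (D k).card = k + 1 := by
  rw [D, Finset.card_image_of_injOn (fun x hx y hy h => fib_injOn_s8 k x hx y hy h)]
  rw [Nat.card_Icc]
  omega

lemma sum_D (k : ℕ) : (∑ x ∈ D k, x) + 2 = Nat.fib (k+4) := by
  rw [D, Finset.sum_image (fib_injOn_s8 k)]
  exact sum_Icc_fib k

lemma mem_D_le (k : ℕ) {x : ℕ} (hx : x ∈ D k) : x ≤ Nat.fib (k+2) := by
  simp only [D, Finset.mem_image, Finset.mem_Icc] at hx
  obtain ⟨j, ⟨_, hj2⟩, rfl⟩ := hx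
  exact Nat.fib_mono hj2

lemma mem_D_of_fib {k x : ℕ} (hfib : IsFibNum x) (hlt : x < Nat.fib (k+4))
    (hne : x ≠ Nat.fib (k+3)) : x ∈ D k := by
  obtain ⟨t, ht, rfl⟩ := hfib
  have h2 : ∃ t', 2 ≤ t' ∧ Nat.fib t' = Nat.fib t := by
    rcases Nat.lt_or_ge t 2 with h | h
    · exact ⟨2, le_refl 2, by interval_cases t; rfl⟩
    · exact ⟨t, h, rfl⟩
  obtain ⟨t', ht', hft'⟩ := h2
  have hle : t' ≤ k + 2 := by
    by_contra hcon
    push_neg at hcon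
    rcases Nat.lt_or_ge t' (k+4) with h4 | h4
    · have : t' = k + 3 := by omega
      exact hne (by rw [← hft', this])
    · have := Nat.fib_mono h4
      omega
  exact Finset.mem_image.2 ⟨t', Finset.mem_Icc.2 ⟨ht', hle⟩, hft'⟩

lemma W_card_rec (k : ℕ) :
    (W (Nat.fib (k+4))).card = 2^(k+1) + (W (Nat.fib (k+2))).card := by
  classical
  set p := Nat.fib (k+3) with hp
  have hfib4 : Nat.fib (k+4) = Nat.fib (k+2) + Nat.fib (k+3) := Nat.fib_add_two
  have hlt23 : Nat.fib (k+2) < Nat.fib (k+3) := Nat.fib_lt_fib_succ (by omega)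
  have hsplit := Finset.card_filter_add_card_filter_not
    (s := W (Nat.fib (k+4))) (p := fun S => p ∈ S)
  -- part with p ∈ S :
  have hA : ((W (Nat.fib (k+4))).filter (fun S => p ∈ S)).card
      = (W (Nat.fib (k+2))).card := by
    refine Finset.card_nbij' (i := fun S => S.erase p) (j := fun S' => insert p S') ?_ ?_ ?_ ?_
    · intro S hS
      simp only [Finset.mem_coe, Finset.mem_filter] at hS ⊢
      obtain ⟨hSW, hpS⟩ := hS
      rw [mem_W] at hSW ⊢
      have hsum : p + ∑ x ∈ S.erase p, x = ∑ x ∈ S, x :=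
        Finset.add_sum_erase S (fun x => x) hpS
      refine ⟨fun x hx => hSW.1 x (Finset.mem_of_mem_erase hx), ?_⟩
      show (∑ x ∈ S.erase p, x) < Nat.fib (k+2)
      omega
    · intro S' hS'
      rw [Finset.mem_coe, mem_W] at hS'
      have hpnot : p ∉ S' := by
        intro hmem
        have := le_sum_of_mem hmem
        omega
      simp only [Finset.mem_coe, Finset.mem_filter]
      constructor
      · rw [mem_W]
        constructor
        · intro x hx
          rcases Finset.mem_insert.1 hx with rfl | hx'
          · exact ⟨k+3, by omega, rfl⟩
          · exact hS'.1 x hx'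
        · rw [Finset.sum_insert hpnot]
          omega
      · exact Finset.mem_insert_self _ _
    · intro S hS
      simp only [Finset.mem_coe, Finset.mem_filter] at hS
      exact Finset.insert_erase hS.2
    · intro S' hS'
      rw [Finset.mem_coe, mem_W] at hS'
      have hpnot : p ∉ S' := by
        intro hmem
        have := le_sum_of_mem hmem
        omega
      exact Finset.erase_insert hpnot
  -- part with p ∉ S :
  have hB : ((W (Nat.fib (k+4))).filter (fun S => ¬ p ∈ S)) = (D k).powerset := by
    ext S
    simp only [Finset.mem_filter, Finset.mem_powerset]
    constructor
    · rintro ⟨hSW, hpS⟩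
      rw [mem_W] at hSW
      intro x hx
      refine mem_D_of_fib (hSW.1 x hx) (lt_of_le_of_lt (le_sum_of_mem hx) hSW.2) ?_
      rintro rfl
      exact hpS hx
    · intro hSD
      have hsumle : (∑ x ∈ S, x) ≤ ∑ x ∈ D k, x :=
        Finset.sum_le_sum_of_subset hSD
      have hsD := sum_D k
      constructor
      · rw [mem_W]
        constructor
        · intro x hx
          have := hSD hx
          simp only [D, Finset.mem_image, Finset.mem_Icc] at this
          obtain ⟨j, ⟨hj, _⟩, rfl⟩ := this
          exact ⟨j, by omega, rfl⟩
        · omega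
      · intro hmem
        have := mem_D_le k (hSD hmem)
        omega
  rw [hB, Finset.card_powerset, card_D] at hsplit
  omega

lemma W_one : W 1 = {∅} := by
  ext S
  rw [mem_W, Finset.mem_singleton]
  constructor
  · rintro ⟨h1, h2⟩
    by_contra hne
    obtain ⟨x, hx⟩ := Finset.nonempty_iff_ne_empty.2 hne
    have := (h1 x hx).one_le
    have := le_sum_of_mem hx
    omega
  · rintro rfl
    simp

lemma W_two : W 2 = {∅, {1}} := by
  ext S
  rw [mem_W, Finset.mem_insert, Finset.mem_singleton]
  constructor
  · rintro ⟨h1, h2⟩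
    have hsub : S ⊆ {1} := by
      intro x hx
      have := (h1 x hx).one_le
      have := le_sum_of_mem hx
      simp only [Finset.mem_singleton]
      omega
    exact Finset.subset_singleton_iff.1 hsub
  · rintro (rfl | rfl)
    · simp
    · refine ⟨?_, by simp⟩
      intro x hx
      simp only [Finset.mem_singleton] at hx
      exact ⟨1, one_pos, by rw [hx]; rfl⟩

lemma N_bounds : ∀ m : ℕ, 2^(m+2) + 2 ≤ 6 * (W (Nat.fib (m+2))).card ∧
    6 * (W (Nat.fib (m+2))).card ≤ 2^(m+2) + 4 := by
  intro m
  induction m using Nat.strong_induction_on with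
  | _ m ih =>
    match m with
    | 0 => rw [show Nat.fib 2 = 1 from rfl, W_one]; simp
    | 1 =>
      rw [show Nat.fib 3 = 2 from rfl, W_two]
      have : ({∅, {1}} : Finset (Finset ℕ)).card = 2 := by decide
      rw [this]
      norm_num
    | (k+2) =>
      show 2^(k+4) + 2 ≤ 6 * (W (Nat.fib (k+4))).card ∧
        6 * (W (Nat.fib (k+4))).card ≤ 2^(k+4) + 4
      have h := W_card_rec k
      have hih := ih k (by omega)
      have hpow : (2:ℕ)^(k+4) = 6 * 2^(k+1) + 2^(k+2) := by ring
      omega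

/-! ### Auxiliary analysis -/

lemma abs_goldConj_lt_one : |Real.goldenConj| < 1 := by
  rw [abs_lt]
  constructor
  · exact Real.neg_one_lt_goldenConj
  · linarith [Real.goldenConj_neg]

lemma fib_div_gold_tendsto :
    Tendsto (fun m : ℕ => (Nat.fib m : ℝ) / Real.goldenRatio ^ m) atTop (𝓝 (1 / Real.sqrt 5)) := by
  have h5 : (0:ℝ) < Real.sqrt 5 := Real.sqrt_pos.2 (by norm_num)
  have habs : |Real.goldenConj / Real.goldenRatio| < 1 := by
    rw [abs_div, abs_of_pos Real.goldenRatio_pos, div_lt_one Real.goldenRatio_pos]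
    exact lt_trans abs_goldConj_lt_one Real.one_lt_goldenRatio
  have h1 : Tendsto (fun m : ℕ => (Real.goldenConj / Real.goldenRatio) ^ m) atTop (𝓝 0) :=
    tendsto_pow_atTop_nhds_zero_of_abs_lt_one habs
  have h2 : Tendsto (fun m : ℕ => (1 - (Real.goldenConj / Real.goldenRatio) ^ m) / Real.sqrt 5) atTop
      (𝓝 ((1 - 0) / Real.sqrt 5)) := (tendsto_const_nhds.sub h1).div_const _
  have heq : ∀ m : ℕ, (1 - (Real.goldenConj / Real.goldenRatio) ^ m) / Real.sqrt 5
      = (Nat.fib m : ℝ) / Real.goldenRatio ^ m := by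
    intro m
    rw [Real.coe_fib_eq]
    have hφm : Real.goldenRatio ^ m ≠ 0 := pow_ne_zero _ Real.goldenRatio_ne_zero
    rw [div_pow]
    field_simp
  have := h2.congr heq
  simpa using this

lemma exists_fib_index (H : ℕ) (hH : 3 ≤ H) :
    ∃ m, 2 ≤ m ∧ Nat.fib m ≤ H + 1 ∧ H + 1 < Nat.fib (m + 1) := by
  classical
  set P : ℕ → Prop := fun k => Nat.fib k ≤ H + 1 with hPdef
  have hP2 : P 2 := by
    have : Nat.fib 2 = 1 := rfl
    simp only [P, this]
    omega
  set m := Nat.findGreatest P (H + 2) with hmdef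
  have hm2 : 2 ≤ m := Nat.le_findGreatest (by omega) hP2
  have hmP : P m := Nat.findGreatest_spec (m := 2) (by omega) hP2
  have hmlt : m < H + 2 := by
    rcases eq_or_lt_of_le (Nat.findGreatest_le (P := P) (H + 2)) with he | hl
    · exfalso
      have h1 : Nat.fib (H + 2) ≤ H + 1 := by
        have := hmP
        rw [hmdef, he] at this
        exact this
      have h2 : H + 2 ≤ Nat.fib (H + 2) := Nat.le_fib_self (by omega)
      omega
    · exact hl
  have hnext : ¬ P (m + 1) :=
    Nat.findGreatest_is_greatest (P := P) (n := H + 2) (by omega) (by omega)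
  refine ⟨m, hm2, hmP, ?_⟩
  simp only [P] at hnext
  omega

lemma pow_gold_rpow (lam : ℝ) (hgl : Real.goldenRatio ^ lam = 2) (m : ℕ) :
    (Real.goldenRatio ^ m) ^ lam = 2 ^ m := by
  rw [← Real.rpow_natCast Real.goldenRatio m, ← Real.rpow_mul Real.goldenRatio_pos.le, mul_comm,
    Real.rpow_mul Real.goldenRatio_pos.le, hgl, Real.rpow_natCast]

lemma rpow_eq_mul (lam : ℝ) (hgl : Real.goldenRatio ^ lam = 2) {x : ℝ} (hx : 0 ≤ x) (m : ℕ) :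
    x ^ lam = (x / Real.goldenRatio ^ m) ^ lam * 2 ^ m := by
  rw [Real.div_rpow hx (pow_nonneg Real.goldenRatio_pos.le m), pow_gold_rpow lam hgl m,
    div_mul_cancel₀]
  positivity

lemma half_pow_tendsto : Tendsto (fun m : ℕ => ((1:ℝ)/2) ^ m) atTop (𝓝 0) :=
  tendsto_pow_atTop_nhds_zero_of_abs_lt_one (by rw [abs_of_pos (by norm_num)]; norm_num)

lemma UBlim (lam : ℝ) (hgl : Real.goldenRatio ^ lam = 2) :
    Tendsto (fun m : ℕ => (((2:ℝ)^(m+1) + 4)/6) / (((Nat.fib m : ℝ) - 1) ^ lam)) atTop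
      (𝓝 (2 * (Real.sqrt 5 ^ lam / 6))) := by
  have h5 : (0:ℝ) < Real.sqrt 5 := Real.sqrt_pos.2 (by norm_num)
  -- (fib m - 1)/φ^m → 1/√5
  have hb : Tendsto (fun m : ℕ => ((1:ℝ)/Real.goldenRatio) ^ m) atTop (𝓝 0) := by
    apply tendsto_pow_atTop_nhds_zero_of_abs_lt_one
    rw [abs_of_pos (by positivity), div_lt_one Real.goldenRatio_pos]
    exact Real.one_lt_goldenRatio
  have hu1 : Tendsto (fun m : ℕ => ((Nat.fib m : ℝ) - 1) / Real.goldenRatio ^ m) atTop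
      (𝓝 (1 / Real.sqrt 5)) := by
    have h := fib_div_gold_tendsto.sub hb
    have heq : ∀ m : ℕ, (Nat.fib m : ℝ) / Real.goldenRatio ^ m - ((1:ℝ)/Real.goldenRatio) ^ m
        = ((Nat.fib m : ℝ) - 1) / Real.goldenRatio ^ m := by
      intro m
      rw [one_div, inv_pow, sub_div, one_div]
    have := h.congr heq
    simpa using this
  have hv : Tendsto (fun m : ℕ => (((Nat.fib m : ℝ) - 1) / Real.goldenRatio ^ m) ^ lam) atTop
      (𝓝 ((1 / Real.sqrt 5) ^ lam)) :=
    hu1.rpow_const (Or.inl (by positivity))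
  have hw : Tendsto (fun m : ℕ => ((2:ℝ)^(m+1) + 4) / 2 ^ m) atTop (𝓝 2) := by
    have h := (tendsto_const_nhds (x := (2:ℝ))).add (half_pow_tendsto.const_mul 4)
    have heq : ∀ m : ℕ, (2:ℝ) + 4 * ((1:ℝ)/2)^m = ((2:ℝ)^(m+1) + 4) / 2 ^ m := by
      intro m
      have h2m : ((2:ℝ))^m ≠ 0 := by positivity
      rw [one_div, inv_pow]
      field_simp
      ring
    have := h.congr heq
    simpa using this
  have hvne : (6:ℝ) * ((1 / Real.sqrt 5) ^ lam) ≠ 0 := by positivity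
  have hd := hw.div (hv.const_mul 6) hvne
  have hval : 2 / (6 * (1 / Real.sqrt 5) ^ lam) = 2 * (Real.sqrt 5 ^ lam / 6) := by
    rw [one_div, Real.inv_rpow (Real.sqrt_nonneg 5)]
    have hne : Real.sqrt 5 ^ lam ≠ 0 := ne_of_gt (Real.rpow_pos_of_pos h5 lam)
    field_simp
  rw [← hval]
  apply hd.congr'
  filter_upwards [eventually_ge_atTop 3] with m hm
  simp only [Pi.div_apply]
  have hfib2 : (2:ℕ) ≤ Nat.fib m := by
    have h4 : Nat.fib 3 ≤ Nat.fib m := Nat.fib_mono hm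
    have : Nat.fib 3 = 2 := rfl
    omega
  have hx1 : (1:ℝ) ≤ (Nat.fib m : ℝ) - 1 := by
    have : (2:ℝ) ≤ (Nat.fib m : ℝ) := by exact_mod_cast hfib2
    linarith
  have hvpos : (0:ℝ) < (((Nat.fib m : ℝ) - 1) / Real.goldenRatio ^ m) ^ lam :=
    Real.rpow_pos_of_pos (div_pos (by linarith) (pow_pos Real.goldenRatio_pos m)) lam
  rw [rpow_eq_mul lam hgl (x := (Nat.fib m : ℝ) - 1) (by linarith) m, div_div, div_div]
  ring

lemma LBlim (lam : ℝ) (hgl : Real.goldenRatio ^ lam = 2) :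
    Tendsto (fun m : ℕ => (((2:ℝ)^m + 2)/6) / ((Nat.fib (m+1) : ℝ) ^ lam)) atTop
      (𝓝 ((Real.sqrt 5 ^ lam / 6) / 2)) := by
  have h5 : (0:ℝ) < Real.sqrt 5 := Real.sqrt_pos.2 (by norm_num)
  have hu2 : Tendsto (fun m : ℕ => (Nat.fib (m+1) : ℝ) / Real.goldenRatio ^ (m+1)) atTop
      (𝓝 (1 / Real.sqrt 5)) :=
    (tendsto_add_atTop_iff_nat 1).2 fib_div_gold_tendsto
  have hv : Tendsto (fun m : ℕ => ((Nat.fib (m+1) : ℝ) / Real.goldenRatio ^ (m+1)) ^ lam) atTop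
      (𝓝 ((1 / Real.sqrt 5) ^ lam)) :=
    hu2.rpow_const (Or.inl (by positivity))
  have hw : Tendsto (fun m : ℕ => ((2:ℝ)^m + 2) / 2 ^ (m+1)) atTop (𝓝 (1/2)) := by
    have h := (tendsto_const_nhds (x := (1:ℝ)/2)).add half_pow_tendsto
    have heq : ∀ m : ℕ, (1:ℝ)/2 + ((1:ℝ)/2)^m = ((2:ℝ)^m + 2) / 2 ^ (m+1) := by
      intro m
      have h2m : ((2:ℝ))^m ≠ 0 := by positivity
      rw [div_pow, one_pow, pow_succ]
      field_simp
    have := h.congr heq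
    simpa using this
  have hvne : (6:ℝ) * ((1 / Real.sqrt 5) ^ lam) ≠ 0 := by positivity
  have hd := hw.div (hv.const_mul 6) hvne
  have hval : (1/2) / (6 * (1 / Real.sqrt 5) ^ lam) = (Real.sqrt 5 ^ lam / 6) / 2 := by
    rw [one_div (Real.sqrt 5), Real.inv_rpow (Real.sqrt_nonneg 5)]
    have hne : Real.sqrt 5 ^ lam ≠ 0 := ne_of_gt (Real.rpow_pos_of_pos h5 lam)
    field_simp
  rw [← hval]
  apply hd.congr'
  filter_upwards [eventually_ge_atTop 1] with m hm
  simp only [Pi.div_apply]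
  have hfib1 : (1:ℕ) ≤ Nat.fib (m+1) := Nat.fib_pos.2 (by omega)
  have hx1 : (1:ℝ) ≤ (Nat.fib (m+1) : ℝ) := by exact_mod_cast hfib1
  have hvpos : (0:ℝ) < ((Nat.fib (m+1) : ℝ) / Real.goldenRatio ^ (m+1)) ^ lam :=
    Real.rpow_pos_of_pos (div_pos (by linarith) (pow_pos Real.goldenRatio_pos (m+1))) lam
  rw [rpow_eq_mul lam hgl (x := (Nat.fib (m+1) : ℝ)) (by linarith) (m+1), div_div, div_div]
  ring

/-- `c/2 ≤ liminf A(H)/H^λ ≤ limsup A(H)/H^λ ≤ 2c` where `c = (√5)^λ / 6`. -/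
theorem summatory_order_of_magnitude (φ lam c : ℝ)
    (hφ : φ = (1 + Real.sqrt 5) / 2)
    (hlam : lam = Real.log 2 / Real.log φ)
    (hc : c = Real.sqrt 5 ^ lam / 6) :
    c / 2 ≤ liminf (fun H : ℕ => (A H : ℝ) / (H : ℝ) ^ lam) atTop ∧
    liminf (fun H : ℕ => (A H : ℝ) / (H : ℝ) ^ lam) atTop ≤
      limsup (fun H : ℕ => (A H : ℝ) / (H : ℝ) ^ lam) atTop ∧
    limsup (fun H : ℕ => (A H : ℝ) / (H : ℝ) ^ lam) atTop ≤ 2 * c := by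
  have h5 : (0:ℝ) < Real.sqrt 5 := Real.sqrt_pos.2 (by norm_num)
  have hφg : φ = Real.goldenRatio := by rw [hφ]
  have hlogφ : 0 < Real.log Real.goldenRatio := Real.log_pos Real.one_lt_goldenRatio
  have hlam0 : 0 < lam := by
    rw [hlam, hφg]
    exact div_pos (Real.log_pos one_lt_two) hlogφ
  have hgl : Real.goldenRatio ^ lam = 2 := by
    rw [hlam, hφg, Real.rpow_def_of_pos Real.goldenRatio_pos, mul_comm,
      div_mul_cancel₀ _ (ne_of_gt hlogφ), Real.exp_log two_pos]
  subst hc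
  set c : ℝ := Real.sqrt 5 ^ lam / 6 with hcdef
  have hcpos : 0 < c := by rw [hcdef]; positivity
  -- eventual upper bound for A
  have evU : ∀ ε : ℝ, 0 < ε → ∀ᶠ H : ℕ in atTop,
      (A H : ℝ) ≤ (2*c + ε) * (H:ℝ)^lam := by
    intro ε hε
    have hev := (UBlim lam hgl).eventually_lt_const
      (show 2 * (Real.sqrt 5 ^ lam / 6) < 2*c + ε by rw [hcdef]; linarith)
    obtain ⟨m₀, hm₀⟩ := eventually_atTop.1 (hev.and (eventually_ge_atTop 3))
    filter_upwards [eventually_ge_atTop (Nat.fib m₀ + 3)] with H hHge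
    obtain ⟨m, hm2, hfle, hflt⟩ := exists_fib_index H (by omega)
    have hm0m : m₀ ≤ m := by
      by_contra hcon
      push_neg at hcon
      have h1 : Nat.fib (m+1) ≤ Nat.fib m₀ := Nat.fib_mono (by omega)
      omega
    obtain ⟨hrm, hm3⟩ := hm₀ m hm0m
    have hfibpos : 1 ≤ Nat.fib (m+1) := Nat.fib_pos.2 (by omega)
    have hA1 : A H ≤ (W (Nat.fib (m+1))).card := by
      have h2 : A H ≤ A (Nat.fib (m+1) - 1) := A_mono (by omega)
      rw [A_eq_card (Nat.fib (m+1) - 1)] at h2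
      have h3 : Nat.fib (m+1) - 1 + 1 = Nat.fib (m+1) := by omega
      rwa [h3] at h2
    have hN := (N_bounds (m-1)).2
    have hmm : m - 1 + 2 = m + 1 := by omega
    rw [hmm] at hN
    have h6 : 6 * A H ≤ 2^(m+1) + 4 := le_trans (by omega) hN
    have hAr : (A H : ℝ) ≤ ((2:ℝ)^(m+1) + 4)/6 := by
      rw [le_div_iff₀ (by norm_num : (0:ℝ) < 6)]
      have hcast := (Nat.cast_le (α := ℝ)).2 h6
      push_cast at hcast
      linarith
    have hfib2 : (2:ℕ) ≤ Nat.fib m := by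
      have h4 : Nat.fib 3 ≤ Nat.fib m := Nat.fib_mono hm3
      have : Nat.fib 3 = 2 := rfl
      omega
    have hxpos : (0:ℝ) < (Nat.fib m : ℝ) - 1 := by
      have : (2:ℝ) ≤ (Nat.fib m : ℝ) := by exact_mod_cast hfib2
      linarith
    have hrpos : (0:ℝ) < ((Nat.fib m : ℝ) - 1)^lam := Real.rpow_pos_of_pos hxpos lam
    have hstep : ((2:ℝ)^(m+1) + 4)/6 ≤ (2*c + ε) * ((Nat.fib m : ℝ) - 1)^lam := by
      have := (div_lt_iff₀ hrpos).1 hrm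
      linarith
    have hmono : ((Nat.fib m : ℝ) - 1)^lam ≤ (H:ℝ)^lam := by
      apply Real.rpow_le_rpow (le_of_lt hxpos) ?_ (le_of_lt hlam0)
      have : (Nat.fib m : ℝ) ≤ (H:ℝ) + 1 := by exact_mod_cast hfle
      linarith
    have hcoef : (0:ℝ) ≤ 2*c + ε := by positivity
    calc (A H : ℝ) ≤ ((2:ℝ)^(m+1) + 4)/6 := hAr
      _ ≤ (2*c + ε) * ((Nat.fib m : ℝ) - 1)^lam := hstep
      _ ≤ (2*c + ε) * (H:ℝ)^lam := mul_le_mul_of_nonneg_left hmono hcoef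
  -- eventual lower bound for A
  have evL : ∀ ε : ℝ, 0 < ε → ∀ᶠ H : ℕ in atTop,
      (c/2 - ε) * (H:ℝ)^lam ≤ (A H : ℝ) := by
    intro ε hε
    have hev := (LBlim lam hgl).eventually_const_lt
      (show c/2 - ε < Real.sqrt 5 ^ lam / 6 / 2 by rw [hcdef]; linarith)
    obtain ⟨m₀, hm₀⟩ := eventually_atTop.1 (hev.and (eventually_ge_atTop 2))
    filter_upwards [eventually_ge_atTop (Nat.fib m₀ + 3)] with H hHge
    rcases le_or_gt (c/2 - ε) 0 with hneg | hpos
    · calc (c/2 - ε) * (H:ℝ)^lam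
          ≤ 0 := mul_nonpos_of_nonpos_of_nonneg hneg
            (Real.rpow_nonneg (Nat.cast_nonneg H) lam)
        _ ≤ (A H : ℝ) := Nat.cast_nonneg _
    · obtain ⟨m, hm2, hfle, hflt⟩ := exists_fib_index H (by omega)
      have hm0m : m₀ ≤ m := by
        by_contra hcon
        push_neg at hcon
        have h1 : Nat.fib (m+1) ≤ Nat.fib m₀ := Nat.fib_mono (by omega)
        omega
      obtain ⟨hrm, hm3⟩ := hm₀ m hm0m
      have hfibpos : 1 ≤ Nat.fib m := Nat.fib_pos.2 (by omega)
      have hA1 : (W (Nat.fib m)).card ≤ A H := by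
        have h2 : A (Nat.fib m - 1) ≤ A H := A_mono (by omega)
        rw [A_eq_card (Nat.fib m - 1)] at h2
        have h3 : Nat.fib m - 1 + 1 = Nat.fib m := by omega
        rwa [h3] at h2
      have hN := (N_bounds (m-2)).1
      have hmm : m - 2 + 2 = m := by omega
      rw [hmm] at hN
      have h6 : 2^m + 2 ≤ 6 * A H := le_trans hN (by omega)
      have hAr : ((2:ℝ)^m + 2)/6 ≤ (A H : ℝ) := by
        rw [div_le_iff₀ (by norm_num : (0:ℝ) < 6)]
        have hcast := (Nat.cast_le (α := ℝ)).2 h6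
        push_cast at hcast
        linarith
      have hfpos : (0:ℝ) < (Nat.fib (m+1) : ℝ) := by
        have h1 : 1 ≤ Nat.fib (m+1) := Nat.fib_pos.2 (by omega)
        exact_mod_cast Nat.lt_of_lt_of_le Nat.zero_lt_one h1
      have hrpos : (0:ℝ) < (Nat.fib (m+1) : ℝ)^lam := Real.rpow_pos_of_pos hfpos lam
      have hstep : (c/2 - ε) * (Nat.fib (m+1) : ℝ)^lam ≤ ((2:ℝ)^m + 2)/6 := by
        have := (lt_div_iff₀ hrpos).1 hrm
        linarith
      have hmono : (H:ℝ)^lam ≤ (Nat.fib (m+1) : ℝ)^lam := by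
        have hHle : (H:ℝ) ≤ (Nat.fib (m+1) : ℝ) := by
          exact_mod_cast (by omega : H ≤ Nat.fib (m+1))
        exact Real.rpow_le_rpow (Nat.cast_nonneg H) hHle (le_of_lt hlam0)
      calc (c/2 - ε) * (H:ℝ)^lam
          ≤ (c/2 - ε) * (Nat.fib (m+1) : ℝ)^lam :=
            mul_le_mul_of_nonneg_left hmono hpos.le
        _ ≤ ((2:ℝ)^m + 2)/6 := hstep
        _ ≤ (A H : ℝ) := hAr
  -- assemble
  set f : ℕ → ℝ := fun H => (A H : ℝ) / (H:ℝ) ^ lam with hfdef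
  have hf0 : ∀ H, 0 ≤ f H := fun H =>
    div_nonneg (Nat.cast_nonneg _) (Real.rpow_nonneg (Nat.cast_nonneg _) lam)
  have evUf : ∀ ε : ℝ, 0 < ε → ∀ᶠ H : ℕ in atTop, f H ≤ 2*c + ε := by
    intro ε hε
    filter_upwards [evU ε hε, eventually_ge_atTop 1] with H h1 h2
    have hH0 : (0:ℝ) < (H:ℝ) := by exact_mod_cast h2
    have hHpos : (0:ℝ) < (H:ℝ)^lam := Real.rpow_pos_of_pos hH0 lam
    show (A H : ℝ) / (H:ℝ) ^ lam ≤ 2*c + ε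
    rw [div_le_iff₀ hHpos]
    exact h1
  have evLf : ∀ ε : ℝ, 0 < ε → ∀ᶠ H : ℕ in atTop, c/2 - ε ≤ f H := by
    intro ε hε
    filter_upwards [evL ε hε, eventually_ge_atTop 1] with H h1 h2
    have hH0 : (0:ℝ) < (H:ℝ) := by exact_mod_cast h2
    have hHpos : (0:ℝ) < (H:ℝ)^lam := Real.rpow_pos_of_pos hH0 lam
    show c/2 - ε ≤ (A H : ℝ) / (H:ℝ) ^ lam
    rw [le_div_iff₀ hHpos]
    exact h1
  have hbddAbove : IsBoundedUnder (· ≤ ·) atTop f := by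
    refine ⟨2*c + 1, eventually_map.2 ?_⟩
    filter_upwards [evUf 1 one_pos] with H h
    exact h
  have hbddBelow : IsBoundedUnder (· ≥ ·) atTop f :=
    ⟨0, eventually_map.2 (Eventually.of_forall hf0)⟩
  have hlimsup : limsup f atTop ≤ 2*c := by
    apply le_of_forall_sub_le
    intro ε hε
    have h1 : limsup f atTop ≤ 2*c + ε :=
      limsup_le_of_le (Filter.isCoboundedUnder_le_of_le atTop hf0) (evUf ε hε)
    linarith
  have hliminf : c/2 ≤ liminf f atTop := by
    apply le_of_forall_sub_le
    intro ε hε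
    have h1 : c/2 - ε ≤ liminf f atTop :=
      le_liminf_of_le hbddAbove.isCoboundedUnder_ge (evLf ε hε)
    linarith
  exact ⟨hliminf, liminf_le_limsup hbddAbove hbddBelow, hlimsup⟩
end
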